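/- arXiv:2203.03842 — 3 statements merged into one kernel-verified Lean document; each statement's English description precedes it below -/
import Mathlib

section
/- The composite 𝕜-algebra homomorphism 𝕜[x_w : w basic] → R̄_0 → R̄_0/⟨F̄_{m,u} : u ∈ Iᵐ_{d,n}⟩ (inclusion of the polynomial subring on the basic variables followed by the quotient map) is an isomorphism. In particular, the quotient R̄_0/⟨F̄_{m,u} : u ∈ Iᵐ_{d,n}⟩ is a polynomial ring over 𝕜 in the d(n−d) basic variables and the ideal ⟨F̄_{m,u} : u ∈ Iᵐ_{d,n}⟩ is prime. (This is the algebraic content of: the chart U_m ∩ Gr^{d,E} of the Grassmannian in its Plücker embedding is defined inside the affine chart U_m by the m-primary Plücker relations and is canonically an affine space with the basic Plücker variables as coordinates.) -/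
open MvPolynomial

namespace Resolution

/-- `I_{d,n}`: the set of `d`-element subsets of `{1,…,n}` (modeled on `Fin n`),
indexing the Plücker variables `p_w`. -/
abbrev Idx (d n : ℕ) : Type := {w : Finset (Fin n) // w.card = d}

variable (𝕜 : Type) [Field 𝕜] (d : ℕ) {n : ℕ}

/-- The symbol `p_{w₁ ⋯ w_k a}` for the index list consisting of the elements of `S` in
increasing order followed by `a`: it is `0` if the entries repeat (i.e. `a ∈ S`), and
otherwise it is `(-1)^{#{x ∈ S | a < x}} · p_{insert a S}`, the sign being that of the
permutation sorting the list. -/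
noncomputable def pApp (S : Finset (Fin n)) (a : Fin n) : MvPolynomial (Idx d n) 𝕜 :=
  if h : a ∉ S ∧ (insert a S).card = d then
    ((-1 : 𝕜) ^ (S.filter fun x => a < x).card) • X ⟨insert a S, h.2⟩
  else 0

/-- The symbol `p_{a w₁ ⋯ w_k}` for the index list consisting of `a` followed by the
elements of `S` in increasing order:  it is `0` if the entries repeat, and otherwise it is
`(-1)^{#{x ∈ S | x < a}} · p_{insert a S}`. -/
noncomputable def pPre (a : Fin n) (S : Finset (Fin n)) : MvPolynomial (Idx d n) 𝕜 :=
  if h : a ∉ S ∧ (insert a S).card = d then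
    ((-1 : 𝕜) ^ (S.filter fun x => x < a).card) • X ⟨insert a S, h.2⟩
  else 0

/-- The `m`-primary Plücker relation
`F_{m,u} = p_m p_{uʳu₀} + ∑_{i=1}^d (-1)^i p_{uʳmᵢ} p_{u₀(m∖mᵢ)}`,
where `u₀ = min (u \ m)`, `uʳ = u.erase u₀` and `m₁ < ⋯ < m_d` lists `m`.
(It is defined to be `0` unless `m.card = d`, `u.card = d` and `2 ≤ (u \ m).card`,
i.e. unless `u ∈ Iᵐ_{d,n}`.) -/
noncomputable def Fmu (m u : Finset (Fin n)) : MvPolynomial (Idx d n) 𝕜 :=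
  if h : m.card = d ∧ u.card = d ∧ 2 ≤ (u \ m).card then
    let u0 : Fin n := (u \ m).min' (Finset.card_pos.mp (lt_of_lt_of_le two_pos h.2.2))
    X ⟨m, h.1⟩ * pApp 𝕜 d (u.erase u0) u0 +
      ∑ i : Fin d, ((-1 : 𝕜) ^ ((i : ℕ) + 1)) •
        (pApp 𝕜 d (u.erase u0) ((m.orderIsoOfFin h.1 i).1) *
          pPre 𝕜 d u0 (m.erase ((m.orderIsoOfFin h.1 i).1)))
  else 0

/-- The rank of an `m`-primary Plücker relation: (number of nonzero terms) − 3. -/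
noncomputable def rank {𝕜 : Type} [Field 𝕜] {d n : ℕ} (F : MvPolynomial (Idx d n) 𝕜) : ℕ :=
  F.support.card - 3

/-- The index set `I_{d,n} ∖ {m}` of the variables `x_w` of the dehomogenized
(with respect to the chart `p_m = 1`) polynomial ring `R̄₀`. -/
abbrev BIdx (d : ℕ) {n : ℕ} (m : Finset (Fin n)) : Type := {w : Idx d n // w.val ≠ m}

/-- Dehomogenization with respect to the chart `p_m = 1`: the `𝕜`-algebra map
`R₀ = 𝕜[p_w : w ∈ I_{d,n}] → R̄₀ = 𝕜[x_w : w ∈ I_{d,n} ∖ {m}]`, `p_m ↦ 1`, `p_w ↦ x_w`. -/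
noncomputable def dehom (m : Finset (Fin n)) :
    MvPolynomial (Idx d n) 𝕜 →ₐ[𝕜] MvPolynomial (BIdx d m) 𝕜 :=
  aeval fun w => if h : w.val = m then 1 else X ⟨w, h⟩


/-- The set of basic indices: `w ∈ I_{d,n}` with `|w ∖ m| = 1`, i.e.
`w = (m ∖ {mᵢ}) ∪ {a}` for some `mᵢ ∈ m`, `a ∈ [n] ∖ m`. -/
abbrev Basic (d : ℕ) {n : ℕ} (m : Finset (Fin n)) : Type :=
  {w : Idx d n // (w.val \ m).card = 1}

/-- The inclusion of the polynomial subring on the basic variables,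
`𝕜[x_w : w basic] → R̄₀`. -/
noncomputable def basicIncl (𝕜 : Type) [Field 𝕜] (d : ℕ) {n : ℕ} (m : Finset (Fin n)) :
    MvPolynomial (Basic d m) 𝕜 →ₐ[𝕜] MvPolynomial (BIdx d m) 𝕜 :=
  rename fun b => ⟨b.1, fun h => by have hb := b.2; rw [h] at hb; simp at hb⟩

/-- The ideal `⟨F̄_{m,u} : u ∈ Iᵐ_{d,n}⟩ ⊆ R̄₀` generated by all dehomogenized
`m`-primary Plücker relations. -/
noncomputable def primaryIdeal (𝕜 : Type) [Field 𝕜] (d : ℕ) {n : ℕ} (m : Finset (Fin n)) :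
    Ideal (MvPolynomial (BIdx d m) 𝕜) :=
  Ideal.span {f | ∃ u : Finset (Fin n), u.card = d ∧ 2 ≤ (u \ m).card ∧
    f = dehom 𝕜 d m (Fmu 𝕜 d m u)}

section Aux

variable {𝕜 : Type} [Field 𝕜] {d n : ℕ}

lemma sdiff_nonempty_of_ne (m : Finset (Fin n)) {u : Finset (Fin n)}
    (hm : m.card = d) (hu : u.card = d) (hne : u ≠ m) : (u \ m).Nonempty := by
  rw [Finset.sdiff_nonempty]
  exact fun hsub => hne (Finset.eq_of_subset_of_card_le hsub (by omega))

lemma ne_of_basic (m : Finset (Fin n)) {u : Finset (Fin n)} (h : 1 ≤ (u \ m).card) :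
    u ≠ m := by
  intro he; subst he; simp at h

lemma min'_spec (m : Finset (Fin n)) {u : Finset (Fin n)} (hne' : (u \ m).Nonempty) :
    (u \ m).min' hne' ∈ u ∧ (u \ m).min' hne' ∉ m := by
  have := Finset.min'_mem _ hne'
  rw [Finset.mem_sdiff] at this; exact this

lemma insert_erase_sdiff (m : Finset (Fin n)) {c : Fin n} (u0 : Fin n) (hc : c ∈ m)
    (u : Finset (Fin n)) : insert c (u.erase u0) \ m = (u \ m).erase u0 := by
  ext x
  simp only [Finset.mem_sdiff, Finset.mem_insert, Finset.mem_erase]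
  constructor
  · rintro ⟨h1 | h2, h3⟩
    · exact absurd (h1 ▸ hc) h3
    · exact ⟨h2.1, h2.2, h3⟩
  · rintro ⟨h1, h2, h3⟩; exact ⟨Or.inr ⟨h1, h2⟩, h3⟩

lemma aIdx_card (m : Finset (Fin n)) {c : Fin n} {u0 : Fin n} {u : Finset (Fin n)}
    (hu : u.card = d) (hu0 : u0 ∈ u) (hc : c ∉ u.erase u0) :
    (insert c (u.erase u0)).card = d := by
  rw [Finset.card_insert_of_notMem hc, Finset.card_erase_of_mem hu0]
  have := Finset.card_pos.mpr ⟨u0, hu0⟩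
  omega

lemma aIdx_ne (m : Finset (Fin n)) {c : Fin n} {u : Finset (Fin n)}
    (hr : 2 ≤ (u \ m).card) (hc : c ∈ m) (hne' : (u \ m).Nonempty) :
    insert c (u.erase ((u \ m).min' hne')) ≠ m := by
  apply ne_of_basic m
  rw [insert_erase_sdiff m _ hc, Finset.card_erase_of_mem (Finset.min'_mem _ hne')]
  omega

lemma bIdx_sdiff (m : Finset (Fin n)) {c u0 : Fin n} (hc : c ∈ m) (hu0 : u0 ∉ m) :
    (insert u0 (m.erase c)) \ m = {u0} := by
  ext x
  simp only [Finset.mem_sdiff, Finset.mem_insert, Finset.mem_erase, Finset.mem_singleton]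
  constructor
  · rintro ⟨h1 | h2, h3⟩
    · exact h1
    · exact absurd h2.2 h3
  · rintro rfl; exact ⟨Or.inl rfl, hu0⟩

lemma bIdx_card (m : Finset (Fin n)) {c u0 : Fin n} (hm : m.card = d) (hc : c ∈ m)
    (hu0 : u0 ∉ m) : (insert u0 (m.erase c)).card = d := by
  rw [Finset.card_insert_of_notMem (fun h => hu0 (Finset.mem_of_mem_erase h)),
    Finset.card_erase_of_mem hc]
  have := Finset.card_pos.mpr ⟨c, hc⟩
  omega

lemma bIdx_basic (m : Finset (Fin n)) {c u0 : Fin n} (hc : c ∈ m) (hu0 : u0 ∉ m) :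
    ((insert u0 (m.erase c)) \ m).card = 1 := by
  rw [bIdx_sdiff m hc hu0]; rfl

/-- The polynomial in the basic variables to which `x_u` is sent, defined by recursion
on `|u \ m|` using the primary Plücker relations. -/
noncomputable def phi (m : Finset (Fin n)) (hm : m.card = d) (u : Finset (Fin n))
    (hu : u.card = d) (hne : u ≠ m) : MvPolynomial (Basic d m) 𝕜 :=
  if h1 : (u \ m).card = 1 then X ⟨⟨u, hu⟩, h1⟩
  else
    have hne' : (u \ m).Nonempty := sdiff_nonempty_of_ne m hm hu hne
    have hr : 2 ≤ (u \ m).card := by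
      have := Finset.card_pos.mpr hne'; omega
    (-1 : 𝕜) ^ (((u.erase ((u \ m).min' hne')).filter
        fun x => (u \ m).min' hne' < x).card + 1) •
      ∑ i : Fin d,
        if hc : ((m.orderIsoOfFin hm i : Fin n)) ∉ u.erase ((u \ m).min' hne') then
          (-1 : 𝕜) ^ ((i : ℕ) + 1 +
              ((u.erase ((u \ m).min' hne')).filter
                fun x => (m.orderIsoOfFin hm i : Fin n) < x).card +
              ((m.erase (m.orderIsoOfFin hm i : Fin n)).filter
                fun x => x < (u \ m).min' hne').card) •
            (phi m hm (insert (m.orderIsoOfFin hm i : Fin n)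
                (u.erase ((u \ m).min' hne')))
                (aIdx_card m hu (min'_spec m hne').1 hc)
                (aIdx_ne m hr (m.orderIsoOfFin hm i).2 hne') *
              X ⟨⟨insert ((u \ m).min' hne')
                    (m.erase (m.orderIsoOfFin hm i : Fin n)),
                  bIdx_card m hm (m.orderIsoOfFin hm i).2 (min'_spec m hne').2⟩,
                bIdx_basic m (m.orderIsoOfFin hm i).2 (min'_spec m hne').2⟩)
        else 0
termination_by (u \ m).card
decreasing_by
  rw [insert_erase_sdiff m _ (m.orderIsoOfFin hm i).2,
    Finset.card_erase_of_mem (Finset.min'_mem _ hne')]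
  omega

end Aux
section Aux2

variable {𝕜 : Type} [Field 𝕜] {d n : ℕ}

lemma dehom_X (m : Finset (Fin n)) (w : Idx d n) (h : w.1 ≠ m) :
    dehom 𝕜 d m (X w) = X (⟨w, h⟩ : BIdx d m) := by
  simp [dehom, dif_neg h]

lemma dehom_X_self (m : Finset (Fin n)) (h : m.card = d) :
    dehom 𝕜 d m (X (⟨m, h⟩ : Idx d n)) = 1 := by
  simp [dehom]

lemma dehom_pApp (m : Finset (Fin n)) {S : Finset (Fin n)} {a : Fin n}
    (h : a ∉ S ∧ (insert a S).card = d) (hne : insert a S ≠ m) :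
    dehom 𝕜 d m (pApp 𝕜 d S a) =
      ((-1 : 𝕜) ^ (S.filter fun x => a < x).card) •
        X (⟨⟨insert a S, h.2⟩, hne⟩ : BIdx d m) := by
  rw [pApp, dif_pos h, map_smul, dehom_X m _ hne]

lemma dehom_pPre (m : Finset (Fin n)) {S : Finset (Fin n)} {a : Fin n}
    (h : a ∉ S ∧ (insert a S).card = d) (hne : insert a S ≠ m) :
    dehom 𝕜 d m (pPre 𝕜 d a S) =
      ((-1 : 𝕜) ^ (S.filter fun x => x < a).card) •
        X (⟨⟨insert a S, h.2⟩, hne⟩ : BIdx d m) := by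
  rw [pPre, dif_pos h, map_smul, dehom_X m _ hne]

lemma pApp_eq_zero {S : Finset (Fin n)} {a : Fin n} (h : a ∈ S) :
    pApp 𝕜 d S a = 0 := by
  rw [pApp, dif_neg]; tauto

lemma Fmu_eq (m : Finset (Fin n)) {u : Finset (Fin n)} (hm : m.card = d)
    (hu : u.card = d) (hr : 2 ≤ (u \ m).card) (hne' : (u \ m).Nonempty) :
    Fmu 𝕜 d m u =
      X ⟨m, hm⟩ * pApp 𝕜 d (u.erase ((u \ m).min' hne')) ((u \ m).min' hne') +
        ∑ i : Fin d, ((-1 : 𝕜) ^ ((i : ℕ) + 1)) •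
          (pApp 𝕜 d (u.erase ((u \ m).min' hne')) ((m.orderIsoOfFin hm i).1) *
            pPre 𝕜 d ((u \ m).min' hne') (m.erase ((m.orderIsoOfFin hm i).1))) := by
  rw [Fmu, dif_pos (⟨hm, hu, hr⟩ : m.card = d ∧ u.card = d ∧ 2 ≤ (u \ m).card)]

lemma dehom_Fmu (m : Finset (Fin n)) {u : Finset (Fin n)} (hm : m.card = d)
    (hu : u.card = d) (hr : 2 ≤ (u \ m).card) (hne' : (u \ m).Nonempty) :
    dehom 𝕜 d m (Fmu 𝕜 d m u) =
      (-1 : 𝕜) ^ (((u.erase ((u \ m).min' hne')).filter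
          fun x => (u \ m).min' hne' < x).card) •
        X (⟨⟨u, hu⟩, ne_of_basic m (le_trans one_le_two hr)⟩ : BIdx d m) +
      ∑ i : Fin d,
        if hc : ((m.orderIsoOfFin hm i : Fin n)) ∉ u.erase ((u \ m).min' hne') then
          (-1 : 𝕜) ^ ((i : ℕ) + 1 +
              ((u.erase ((u \ m).min' hne')).filter
                fun x => (m.orderIsoOfFin hm i : Fin n) < x).card +
              ((m.erase (m.orderIsoOfFin hm i : Fin n)).filter
                fun x => x < (u \ m).min' hne').card) •
            (X (⟨⟨insert ((m.orderIsoOfFin hm i : Fin n))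
                  (u.erase ((u \ m).min' hne')),
                aIdx_card m hu (min'_spec m hne').1 hc⟩,
                aIdx_ne m hr (m.orderIsoOfFin hm i).2 hne'⟩ : BIdx d m) *
             X (⟨⟨insert ((u \ m).min' hne')
                  (m.erase (m.orderIsoOfFin hm i : Fin n)),
                bIdx_card m hm (m.orderIsoOfFin hm i).2 (min'_spec m hne').2⟩,
                ne_of_basic m
                  (bIdx_basic m (m.orderIsoOfFin hm i).2 (min'_spec m hne').2).ge⟩ : BIdx d m))
        else 0 := by
  obtain ⟨hu0u, hu0m⟩ := min'_spec m hne'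
  have key : insert ((u \ m).min' hne') (u.erase ((u \ m).min' hne')) = u :=
    Finset.insert_erase hu0u
  rw [Fmu_eq m hm hu hr hne', map_add, map_mul, map_sum, dehom_X_self,
    dehom_pApp m ⟨Finset.notMem_erase _ _, by rw [key]; exact hu⟩ (by rw [key]; exact ne_of_basic m (le_trans one_le_two hr))]
  congr 1
  · rw [one_mul]
    congr 1
    apply congrArg
    exact Subtype.ext (Subtype.ext key)
  · apply Finset.sum_congr rfl
    intro i _
    by_cases hc : ((m.orderIsoOfFin hm i : Fin n)) ∈ u.erase ((u \ m).min' hne')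
    · rw [dif_neg (by simpa using hc), pApp_eq_zero hc, zero_mul, smul_zero, map_zero]
    · rw [dif_pos hc, map_smul, map_mul,
        dehom_pApp m ⟨hc, aIdx_card m hu hu0u hc⟩
          (aIdx_ne m hr (m.orderIsoOfFin hm i).2 hne'),
        dehom_pPre m ⟨fun h => hu0m (Finset.mem_of_mem_erase h),
            bIdx_card m hm (m.orderIsoOfFin hm i).2 hu0m⟩
          (ne_of_basic m
            (bIdx_basic m (m.orderIsoOfFin hm i).2 hu0m).ge),
        smul_mul_assoc, mul_smul_comm, smul_smul, smul_smul]
      congr 1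
      ring

end Aux2
section Aux3

variable {𝕜 : Type} [Field 𝕜] {d n : ℕ}

lemma phi_basic (m : Finset (Fin n)) (hm : m.card = d) {u : Finset (Fin n)}
    (hu : u.card = d) (hne : u ≠ m) (h1 : (u \ m).card = 1) :
    phi (𝕜 := 𝕜) m hm u hu hne = X ⟨⟨u, hu⟩, h1⟩ := by
  rw [phi, dif_pos h1]

lemma phi_eq (m : Finset (Fin n)) (hm : m.card = d) {u : Finset (Fin n)}
    (hu : u.card = d) (hne : u ≠ m) (hr : 2 ≤ (u \ m).card) (hne' : (u \ m).Nonempty) :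
    phi (𝕜 := 𝕜) m hm u hu hne =
      (-1 : 𝕜) ^ (((u.erase ((u \ m).min' hne')).filter
          fun x => (u \ m).min' hne' < x).card + 1) •
        ∑ i : Fin d,
          if hc : ((m.orderIsoOfFin hm i : Fin n)) ∉ u.erase ((u \ m).min' hne') then
            (-1 : 𝕜) ^ ((i : ℕ) + 1 +
                ((u.erase ((u \ m).min' hne')).filter
                  fun x => (m.orderIsoOfFin hm i : Fin n) < x).card +
                ((m.erase (m.orderIsoOfFin hm i : Fin n)).filter
                  fun x => x < (u \ m).min' hne').card) •
              (phi (𝕜 := 𝕜) m hm (insert ((m.orderIsoOfFin hm i : Fin n))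
                  (u.erase ((u \ m).min' hne')))
                  (aIdx_card m hu (min'_spec m hne').1 hc)
                  (aIdx_ne m hr (m.orderIsoOfFin hm i).2 hne') *
                X ⟨⟨insert ((u \ m).min' hne')
                      (m.erase (m.orderIsoOfFin hm i : Fin n)),
                    bIdx_card m hm (m.orderIsoOfFin hm i).2 (min'_spec m hne').2⟩,
                  bIdx_basic m (m.orderIsoOfFin hm i).2 (min'_spec m hne').2⟩)
          else 0 := by
  rw [phi, dif_neg (by omega)]

/-- The function sending each variable `x_w` to its expression in the basic variables. -/
noncomputable def psiFun (m : Finset (Fin n)) (hm : m.card = d) :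
    BIdx d m → MvPolynomial (Basic d m) 𝕜 :=
  fun w => phi m hm w.1.1 w.1.2 w.2

/-- The retraction `R̄₀ → 𝕜[x_w : w basic]`. -/
noncomputable def psi (m : Finset (Fin n)) (hm : m.card = d) :
    MvPolynomial (BIdx d m) 𝕜 →ₐ[𝕜] MvPolynomial (Basic d m) 𝕜 :=
  aeval (psiFun m hm)

lemma psi_X (m : Finset (Fin n)) (hm : m.card = d) (w : BIdx d m) :
    psi (𝕜 := 𝕜) m hm (X w) = phi m hm w.1.1 w.1.2 w.2 := by
  simp [psi, psiFun]

lemma psi_dehom_Fmu (m : Finset (Fin n)) (hm : m.card = d) {u : Finset (Fin n)}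
    (hu : u.card = d) (hr : 2 ≤ (u \ m).card) :
    psi m hm (dehom 𝕜 d m (Fmu 𝕜 d m u)) = 0 := by
  have hne' : (u \ m).Nonempty := Finset.card_pos.mp (by omega)
  rw [dehom_Fmu m hm hu hr hne', map_add, map_smul, map_sum, psi_X,
    phi_eq m hm hu _ hr hne', smul_smul, ← pow_add]
  have hodd : ((-1 : 𝕜) ^
      ((((u.erase ((u \ m).min' hne')).filter fun x => (u \ m).min' hne' < x).card) +
       ((((u.erase ((u \ m).min' hne')).filter fun x => (u \ m).min' hne' < x).card) + 1)))
      = -1 :=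
    Odd.neg_one_pow ⟨_, by ring⟩
  rw [hodd, neg_one_smul, neg_add_eq_zero]
  apply Finset.sum_congr rfl
  intro i _
  by_cases hc : ((m.orderIsoOfFin hm i : Fin n)) ∈ u.erase ((u \ m).min' hne')
  · rw [dif_neg (by simpa using hc), dif_neg (by simpa using hc), map_zero]
  · rw [dif_pos hc, dif_pos hc, map_smul, map_mul, psi_X, psi_X]
    congr 1
    rw [phi_basic m hm _ _ (bIdx_basic m (m.orderIsoOfFin hm i).2 (min'_spec m hne').2)]

end Aux3
section Aux4

variable {𝕜 : Type} [Field 𝕜] {d n : ℕ}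

lemma basicIncl_X (m : Finset (Fin n)) (b : Basic d m) :
    basicIncl 𝕜 d m (X b) =
      X (⟨b.1, fun h => by have hb := b.2; rw [h] at hb; simp at hb⟩ : BIdx d m) := by
  simp [basicIncl]

lemma mk_basicIncl_phi (m : Finset (Fin n)) (hm : m.card = d) :
    ∀ (k : ℕ) (u : Finset (Fin n)) (hu : u.card = d) (hne : u ≠ m),
      (u \ m).card ≤ k →
      Ideal.Quotient.mkₐ 𝕜 (primaryIdeal 𝕜 d m)
          (basicIncl 𝕜 d m (phi m hm u hu hne)) =
        Ideal.Quotient.mkₐ 𝕜 (primaryIdeal 𝕜 d m) (X ⟨⟨u, hu⟩, hne⟩) := by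
  intro k
  induction k with
  | zero =>
    intro u hu hne hk
    have := Finset.card_pos.mpr (sdiff_nonempty_of_ne m hm hu hne)
    omega
  | succ k ih =>
    intro u hu hne hk
    by_cases h1 : (u \ m).card = 1
    · rw [phi_basic m hm hu hne h1, basicIncl_X]
    · have hne' : (u \ m).Nonempty := sdiff_nonempty_of_ne m hm hu hne
      have hr : 2 ≤ (u \ m).card := by
        have := Finset.card_pos.mpr hne'; omega
      have hT : (∑ i : Fin d,
          Ideal.Quotient.mkₐ 𝕜 (primaryIdeal 𝕜 d m) (basicIncl 𝕜 d m
            (if hc : ((m.orderIsoOfFin hm i : Fin n)) ∉ u.erase ((u \ m).min' hne') then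
              (-1 : 𝕜) ^ ((i : ℕ) + 1 +
                  ((u.erase ((u \ m).min' hne')).filter
                    fun x => (m.orderIsoOfFin hm i : Fin n) < x).card +
                  ((m.erase (m.orderIsoOfFin hm i : Fin n)).filter
                    fun x => x < (u \ m).min' hne').card) •
                (phi (𝕜 := 𝕜) m hm (insert ((m.orderIsoOfFin hm i : Fin n))
                    (u.erase ((u \ m).min' hne')))
                    (aIdx_card m hu (min'_spec m hne').1 hc)
                    (aIdx_ne m hr (m.orderIsoOfFin hm i).2 hne') *
                  X ⟨⟨insert ((u \ m).min' hne')
                        (m.erase (m.orderIsoOfFin hm i : Fin n)),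
                      bIdx_card m hm (m.orderIsoOfFin hm i).2 (min'_spec m hne').2⟩,
                    bIdx_basic m (m.orderIsoOfFin hm i).2 (min'_spec m hne').2⟩)
            else 0))) =
          ∑ i : Fin d,
            (if hc : ((m.orderIsoOfFin hm i : Fin n)) ∉ u.erase ((u \ m).min' hne') then
              (-1 : 𝕜) ^ ((i : ℕ) + 1 +
                  ((u.erase ((u \ m).min' hne')).filter
                    fun x => (m.orderIsoOfFin hm i : Fin n) < x).card +
                  ((m.erase (m.orderIsoOfFin hm i : Fin n)).filter
                    fun x => x < (u \ m).min' hne').card) •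
                (Ideal.Quotient.mkₐ 𝕜 (primaryIdeal 𝕜 d m)
                    (X ⟨⟨insert ((m.orderIsoOfFin hm i : Fin n))
                        (u.erase ((u \ m).min' hne')),
                      aIdx_card m hu (min'_spec m hne').1 hc⟩,
                      aIdx_ne m hr (m.orderIsoOfFin hm i).2 hne'⟩) *
                  Ideal.Quotient.mkₐ 𝕜 (primaryIdeal 𝕜 d m)
                    (X ⟨⟨insert ((u \ m).min' hne')
                          (m.erase (m.orderIsoOfFin hm i : Fin n)),
                        bIdx_card m hm (m.orderIsoOfFin hm i).2 (min'_spec m hne').2⟩,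
                      ne_of_basic m
                        (bIdx_basic m (m.orderIsoOfFin hm i).2 (min'_spec m hne').2).ge⟩))
            else 0) := by
        apply Finset.sum_congr rfl
        intro i _
        by_cases hc : ((m.orderIsoOfFin hm i : Fin n)) ∈ u.erase ((u \ m).min' hne')
        · rw [dif_neg (by simpa using hc), dif_neg (by simpa using hc), map_zero, map_zero]
        · rw [dif_pos hc, dif_pos hc, map_smul, map_smul, map_mul, map_mul, basicIncl_X,
            ih _ _ _ (by
              rw [insert_erase_sdiff m _ (m.orderIsoOfFin hm i).2,
                Finset.card_erase_of_mem (Finset.min'_mem _ hne')]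
              omega)]
      have hFz : Ideal.Quotient.mkₐ 𝕜 (primaryIdeal 𝕜 d m)
          (dehom 𝕜 d m (Fmu 𝕜 d m u)) = 0 := by
        rw [Ideal.Quotient.mkₐ_eq_mk, Ideal.Quotient.eq_zero_iff_mem]
        exact Ideal.subset_span ⟨u, hu, hr, rfl⟩
      rw [dehom_Fmu m hm hu hr hne', map_add, map_smul, map_sum] at hFz
      have hT2 : (∑ i : Fin d,
          Ideal.Quotient.mkₐ 𝕜 (primaryIdeal 𝕜 d m)
            (if hc : ((m.orderIsoOfFin hm i : Fin n)) ∉ u.erase ((u \ m).min' hne') then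
              (-1 : 𝕜) ^ ((i : ℕ) + 1 +
                  ((u.erase ((u \ m).min' hne')).filter
                    fun x => (m.orderIsoOfFin hm i : Fin n) < x).card +
                  ((m.erase (m.orderIsoOfFin hm i : Fin n)).filter
                    fun x => x < (u \ m).min' hne').card) •
                (X (⟨⟨insert ((m.orderIsoOfFin hm i : Fin n))
                      (u.erase ((u \ m).min' hne')),
                    aIdx_card m hu (min'_spec m hne').1 hc⟩,
                    aIdx_ne m hr (m.orderIsoOfFin hm i).2 hne'⟩ : BIdx d m) *
                 X (⟨⟨insert ((u \ m).min' hne')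
                      (m.erase (m.orderIsoOfFin hm i : Fin n)),
                    bIdx_card m hm (m.orderIsoOfFin hm i).2 (min'_spec m hne').2⟩,
                    ne_of_basic m
                      (bIdx_basic m (m.orderIsoOfFin hm i).2 (min'_spec m hne').2).ge⟩ : BIdx d m))
            else 0)) =
          ∑ i : Fin d,
            (if hc : ((m.orderIsoOfFin hm i : Fin n)) ∉ u.erase ((u \ m).min' hne') then
              (-1 : 𝕜) ^ ((i : ℕ) + 1 +
                  ((u.erase ((u \ m).min' hne')).filter
                    fun x => (m.orderIsoOfFin hm i : Fin n) < x).card +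
                  ((m.erase (m.orderIsoOfFin hm i : Fin n)).filter
                    fun x => x < (u \ m).min' hne').card) •
                (Ideal.Quotient.mkₐ 𝕜 (primaryIdeal 𝕜 d m)
                    (X ⟨⟨insert ((m.orderIsoOfFin hm i : Fin n))
                        (u.erase ((u \ m).min' hne')),
                      aIdx_card m hu (min'_spec m hne').1 hc⟩,
                      aIdx_ne m hr (m.orderIsoOfFin hm i).2 hne'⟩) *
                  Ideal.Quotient.mkₐ 𝕜 (primaryIdeal 𝕜 d m)
                    (X ⟨⟨insert ((u \ m).min' hne')
                          (m.erase (m.orderIsoOfFin hm i : Fin n)),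
                        bIdx_card m hm (m.orderIsoOfFin hm i).2 (min'_spec m hne').2⟩,
                      ne_of_basic m
                        (bIdx_basic m (m.orderIsoOfFin hm i).2 (min'_spec m hne').2).ge⟩))
            else 0) := by
        apply Finset.sum_congr rfl
        intro i _
        by_cases hc : ((m.orderIsoOfFin hm i : Fin n)) ∈ u.erase ((u \ m).min' hne')
        · rw [dif_neg (by simpa using hc), dif_neg (by simpa using hc), map_zero]
        · rw [dif_pos hc, dif_pos hc, map_smul, map_mul]
      rw [hT2] at hFz
      rw [phi_eq m hm hu hne hr hne', map_smul, map_smul, map_sum, map_sum, hT,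
        eq_neg_of_add_eq_zero_right hFz, smul_neg, smul_smul, ← pow_add]
      have hodd : ((-1 : 𝕜) ^
          (((((u.erase ((u \ m).min' hne')).filter fun x => (u \ m).min' hne' < x).card) + 1) +
           ((((u.erase ((u \ m).min' hne')).filter fun x => (u \ m).min' hne' < x).card)))
          = -1) :=
        Odd.neg_one_pow ⟨_, by ring⟩
      rw [hodd, neg_one_smul, neg_neg]

end Aux4
section Aux5

variable {𝕜 : Type} [Field 𝕜] {d n : ℕ}

lemma card_msdiff (m : Finset (Fin n)) {u : Finset (Fin n)} (hm : m.card = d)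
    (hu : u.card = d) (h1 : (u \ m).card = 1) : (m \ u).card = 1 := by
  have h2 := Finset.card_sdiff_add_card_inter u m
  have h3 := Finset.card_sdiff_add_card_inter m u
  rw [Finset.inter_comm] at h3
  omega

lemma min'_eq_of_singleton {s : Finset (Fin n)} {a : Fin n} (h : s = {a})
    (hne : s.Nonempty) : s.min' hne = a := by
  subst h; exact Finset.min'_singleton a

lemma eq_singleton_card_one {s : Finset (Fin n)} (h1 : s.card = 1) (hne : s.Nonempty) :
    s = {s.min' hne} := by
  obtain ⟨a, rfl⟩ := Finset.card_eq_one.mp h1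
  rw [Finset.min'_singleton]

lemma msdiff_insert (m : Finset (Fin n)) {c a : Fin n} (hc : c ∈ m) (ha : a ∉ m) :
    m \ insert a (m.erase c) = {c} := by
  ext x
  simp only [Finset.mem_sdiff, Finset.mem_insert, Finset.mem_erase, Finset.mem_singleton,
    not_or, not_and]
  constructor
  · rintro ⟨hxm, -, h2⟩
    by_contra hxc
    exact (h2 hxc) hxm
  · rintro rfl
    exact ⟨hc, fun h => ha (h ▸ hc), fun h => absurd rfl h⟩

lemma insert_min'_erase (m : Finset (Fin n)) {u : Finset (Fin n)} (hm : m.card = d)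
    (hu : u.card = d) (h1 : (u \ m).card = 1) (h2 : (u \ m).Nonempty)
    (h3 : (m \ u).Nonempty) :
    insert ((u \ m).min' h2) (m.erase ((m \ u).min' h3)) = u := by
  set a := (u \ m).min' h2 with ha_def
  set c := (m \ u).min' h3 with hc_def
  have hA : u \ m = {a} := eq_singleton_card_one h1 _
  have hC : m \ u = {c} := eq_singleton_card_one (card_msdiff m hm hu h1) _
  have ham : a ∈ u ∧ a ∉ m := by
    have : a ∈ u \ m := Finset.min'_mem _ _
    rwa [Finset.mem_sdiff] at this
  have hcm : c ∈ m ∧ c ∉ u := by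
    have : c ∈ m \ u := Finset.min'_mem _ _
    rwa [Finset.mem_sdiff] at this
  ext x
  have hxA : x ∈ u ∧ x ∉ m ↔ x = a := by
    rw [← Finset.mem_sdiff, hA, Finset.mem_singleton]
  have hxC : x ∈ m ∧ x ∉ u ↔ x = c := by
    rw [← Finset.mem_sdiff, hC, Finset.mem_singleton]
  simp only [Finset.mem_insert, Finset.mem_erase]
  constructor
  · rintro (rfl | ⟨hxc, hxm⟩)
    · exact ham.1
    · by_contra hxu
      exact hxc (hxC.mp ⟨hxm, hxu⟩)
  · intro hxu
    by_cases hxm : x ∈ m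
    · exact Or.inr ⟨fun he => hcm.2 (he ▸ hxu), hxm⟩
    · exact Or.inl (hxA.mp ⟨hxu, hxm⟩)

/-- The basic indices are in bijection with pairs `(c, a)` with `c ∈ m`, `a ∉ m`. -/
noncomputable def basicEquiv (m : Finset (Fin n)) (hm : m.card = d) :
    Basic d m ≃ {p : Fin n × Fin n // p.1 ∈ m ∧ p.2 ∉ m} where
  toFun w :=
    ⟨⟨(m \ w.1.1).min' (Finset.card_pos.mp (by rw [card_msdiff m hm w.1.2 w.2]; norm_num)),
      (w.1.1 \ m).min' (Finset.card_pos.mp (by rw [w.2]; norm_num))⟩,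
      by
        refine ⟨?_, ?_⟩
        · have h := Finset.min'_mem (m \ w.1.1)
            (Finset.card_pos.mp (by rw [card_msdiff m hm w.1.2 w.2]; norm_num))
          exact (Finset.mem_sdiff.mp h).1
        · have h := Finset.min'_mem (w.1.1 \ m)
            (Finset.card_pos.mp (by rw [w.2]; norm_num))
          exact (Finset.mem_sdiff.mp h).2⟩
  invFun p :=
    ⟨⟨insert p.1.2 (m.erase p.1.1), bIdx_card m hm p.2.1 p.2.2⟩,
      bIdx_basic m p.2.1 p.2.2⟩
  left_inv w := by
    apply Subtype.ext
    apply Subtype.ext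
    dsimp only
    exact insert_min'_erase m hm w.1.2 w.2
      (Finset.card_pos.mp (by rw [w.2]; norm_num))
      (Finset.card_pos.mp (by rw [card_msdiff m hm w.1.2 w.2]; norm_num))
  right_inv p := by
    apply Subtype.ext
    apply Prod.ext
    · dsimp only
      exact min'_eq_of_singleton (msdiff_insert m p.2.1 p.2.2) _
    · dsimp only
      exact min'_eq_of_singleton (bIdx_sdiff m p.2.1 p.2.2) _

lemma card_basic (m : Finset (Fin n)) (hm : m.card = d) :
    Nat.card (Basic d m) = d * (n - d) := by
  rw [Nat.card_congr (basicEquiv m hm), Nat.card_eq_fintype_card, Fintype.card_subtype]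
  have he : (Finset.univ.filter fun p : Fin n × Fin n => p.1 ∈ m ∧ p.2 ∉ m)
      = m ×ˢ mᶜ := by
    ext p
    simp [Finset.mem_product]
  rw [he, Finset.card_product, hm, Finset.card_compl, hm, Fintype.card_fin]

end Aux5

/-- **The chart `U_m ∩ Gr^{d,E}` is an affine space in the basic variables.**
The composite `𝕜`-algebra homomorphism
`𝕜[x_w : w basic] → R̄₀ → R̄₀/⟨F̄_{m,u} : u ∈ Iᵐ_{d,n}⟩` is an isomorphism.  In particular
the quotient is a polynomial ring over `𝕜` in the `d(n−d)` basic variables, and the ideal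
`⟨F̄_{m,u} : u ∈ Iᵐ_{d,n}⟩` is prime. -/
theorem basic_variables_give_affine_space
    (𝕜 : Type) [Field 𝕜] {d n : ℕ} (hd : 1 ≤ d) (hdn : d < n)
    (m : Finset (Fin n)) (hm : m.card = d) :
    Function.Bijective
      ((Ideal.Quotient.mkₐ 𝕜 (primaryIdeal 𝕜 d m)).comp (basicIncl 𝕜 d m)) ∧
    (primaryIdeal 𝕜 d m).IsPrime ∧
    Nat.card (Basic d m) = d * (n - d) := by
  have hkill : ∀ a ∈ primaryIdeal 𝕜 d m, psi m hm a = 0 := by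
    have hle : primaryIdeal 𝕜 d m ≤ RingHom.ker (psi m hm) := by
      rw [primaryIdeal, Ideal.span_le]
      rintro f ⟨u, hu, hr, rfl⟩
      exact SetLike.mem_coe.mpr (RingHom.mem_ker.mpr (psi_dehom_Fmu m hm hu hr))
    exact fun a ha => RingHom.mem_ker.mp (hle ha)
  set I := primaryIdeal 𝕜 d m with hI
  set χ := (Ideal.Quotient.mkₐ 𝕜 I).comp (basicIncl 𝕜 d m) with hχ
  set ψq := Ideal.Quotient.liftₐ I (psi m hm) hkill with hψq
  have h1 : ψq.comp χ = AlgHom.id 𝕜 _ := by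
    apply MvPolynomial.algHom_ext
    intro b
    show ψq (Ideal.Quotient.mkₐ 𝕜 I (basicIncl 𝕜 d m (X b))) = X b
    rw [basicIncl_X, Ideal.Quotient.mkₐ_eq_mk, hψq, Ideal.Quotient.liftₐ_apply]
    show psi m hm (X _) = X b
    rw [psi_X, phi_basic m hm _ _ b.2]
  have h2 : χ.comp ψq = AlgHom.id 𝕜 _ := by
    apply Ideal.Quotient.algHom_ext 𝕜
    apply MvPolynomial.algHom_ext
    intro w
    show χ (ψq (Ideal.Quotient.mkₐ 𝕜 I (X w))) = Ideal.Quotient.mkₐ 𝕜 I (X w)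
    rw [Ideal.Quotient.mkₐ_eq_mk, hψq, Ideal.Quotient.liftₐ_apply]
    show Ideal.Quotient.mkₐ 𝕜 I (basicIncl 𝕜 d m (psi m hm (X w))) = _
    rw [psi_X]
    exact mk_basicIncl_phi m hm ((w.1.1 \ m).card) w.1.1 w.1.2 w.2 le_rfl
  have hli : ∀ x, ψq (χ x) = x := fun x => by
    simpa using AlgHom.congr_fun h1 x
  have hri : ∀ y, χ (ψq y) = y := fun y => by
    simpa using AlgHom.congr_fun h2 y
  refine ⟨⟨Function.LeftInverse.injective hli, Function.RightInverse.surjective hri⟩, ?_,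
    card_basic m hm⟩
  have hq : IsDomain (MvPolynomial (BIdx d m) 𝕜 ⧸ I) :=
    Function.Injective.isDomain ψq.toRingHom (Function.LeftInverse.injective hri)
  exact (Ideal.Quotient.isDomain_iff_prime I).mp hq

end Resolution
end

section
/- Let u ∈ Iᵐ_{d,n} and F = F_{m,u}. For any two distinct s, t ∈ S_F, the two-element sets {u_s, v_s} and {u_t, v_t} of elements of I_{d,n} are disjoint. In particular, within the fixed m-primary relation F, each index u_s occurring in a term determines its partner v_s, and vice versa. -/
open MvPolynomial

namespace Resolution

variable (𝕜 : Type) [Field 𝕜] (d : ℕ) {n : ℕ}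

section Aux
variable {R σ : Type*} [CommRing R] [DecidableEq σ]

lemma aux_support_smul_mul (c c' c'' : R) (a b : σ) :
    (c • ((c' • (X a : MvPolynomial σ R)) * (c'' • X b))).support ⊆
      {Finsupp.single a 1 + Finsupp.single b 1} := by
  have h1 : (c • ((c' • (X a : MvPolynomial σ R)) * (c'' • X b))) =
      monomial (Finsupp.single a 1 + Finsupp.single b 1) (c * c' * c'') := by
    rw [smul_mul_smul_comm, smul_smul, ← mul_assoc, X, X, monomial_mul, one_mul,
      smul_monomial, smul_eq_mul, mul_one]
  rw [h1]
  exact support_monomial_subset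

lemma aux_support_pair {a b : σ} (h : a ≠ b) :
    (Finsupp.single a 1 + Finsupp.single b 1 : σ →₀ ℕ).support = {a, b} := by
  rw [Finsupp.support_add_eq, Finsupp.support_single_ne_zero a one_ne_zero,
    Finsupp.support_single_ne_zero b one_ne_zero]
  · rfl
  · rw [Finsupp.support_single_ne_zero a one_ne_zero,
      Finsupp.support_single_ne_zero b one_ne_zero]
    exact Finset.disjoint_singleton.mpr h

lemma aux_disj_pair {a b c e : σ} (h1 : a ≠ c) (h2 : a ≠ e) (h3 : b ≠ c) (h4 : b ≠ e) :
    Disjoint ({a, b} : Finset σ) {c, e} := by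
  rw [Finset.disjoint_left]
  rintro x hx hx'
  rcases Finset.mem_insert.mp hx with rfl | hx
  · rcases Finset.mem_insert.mp hx' with rfl | hx'
    · exact h1 rfl
    · exact h2 (Finset.mem_singleton.mp hx')
  · have hb := Finset.mem_singleton.mp hx
    subst hb
    rcases Finset.mem_insert.mp hx' with rfl | hx'
    · exact h3 rfl
    · exact h4 (Finset.mem_singleton.mp hx')

end Aux

/-- **The index pairs of the terms of an `m`-primary Plücker relation are disjoint.**
Each nonzero term of `F_{m,u}` is (up to sign) a product `p_{u_s} p_{v_s}` of two distinct
variables (so its monomial is supported on a two-element set `{u_s, v_s} ⊆ I_{d,n}`), and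
for distinct terms `s ≠ t` the two-element sets `{u_s, v_s}` and `{u_t, v_t}` are disjoint.
In particular, within `F_{m,u}`, each index `u_s` occurring in a term determines its
partner `v_s`, and vice versa. -/
theorem terms_of_Fmu_disjoint
    (𝕜 : Type) [Field 𝕜] {d n : ℕ} (hd : 1 ≤ d) (hdn : d < n)
    (m u : Finset (Fin n)) (hm : m.card = d) (hu : u.card = d)
    (hu2 : 2 ≤ (u \ m).card) :
    (∀ s ∈ (Fmu 𝕜 d m u).support, s.support.card = 2) ∧
    (∀ s ∈ (Fmu 𝕜 d m u).support, ∀ t ∈ (Fmu 𝕜 d m u).support, s ≠ t →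
      Disjoint s.support t.support) := by
  classical
  have hpos : 0 < (u \ m).card := lt_of_lt_of_le two_pos hu2
  set u0 : Fin n := (u \ m).min' (Finset.card_pos.mp hpos) with hu0def
  have hu0mem : u0 ∈ u \ m := (u \ m).min'_mem _
  have hu0u : u0 ∈ u := (Finset.mem_sdiff.mp hu0mem).1
  have hu0m : u0 ∉ m := (Finset.mem_sdiff.mp hu0mem).2
  obtain ⟨y, hy⟩ : ∃ y, y ∈ (u \ m).erase u0 := by
    have h1 : 0 < ((u \ m).erase u0).card := by
      rw [Finset.card_erase_of_mem hu0mem]; omega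
    exact Finset.card_pos.mp h1 |>.imp fun _ h => h
  have hyu0 : y ≠ u0 := (Finset.mem_erase.mp hy).1
  have hyu : y ∈ u := (Finset.mem_sdiff.mp (Finset.mem_erase.mp hy).2).1
  have hym : y ∉ m := (Finset.mem_sdiff.mp (Finset.mem_erase.mp hy).2).2
  set mi : Fin d → Fin n := fun i => (m.orderIsoOfFin hm i).1 with hmidef
  have hmim : ∀ i, mi i ∈ m := fun i => (m.orderIsoOfFin hm i).2
  have hmiu0 : ∀ i, mi i ≠ u0 := fun i h => hu0m (h ▸ hmim i)
  have hmiinj : Function.Injective mi := fun i j h =>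
    (m.orderIsoOfFin hm).injective (Subtype.ext h)
  set A : Fin d → Finset (Fin n) := fun i => insert (mi i) (u.erase u0) with hAdef
  set B : Fin d → Finset (Fin n) := fun i => insert u0 (m.erase (mi i)) with hBdef
  have hcardA : ∀ i, mi i ∉ u → (A i).card = d := by
    intro i h
    rw [hAdef]
    rw [Finset.card_insert_of_notMem (fun hc => h (Finset.mem_of_mem_erase hc)),
      Finset.card_erase_of_mem hu0u, hu]
    omega
  have hcardB : ∀ i, (B i).card = d := by
    intro i
    rw [hBdef]
    rw [Finset.card_insert_of_notMem (fun hc => hu0m (Finset.mem_of_mem_erase hc)),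
      Finset.card_erase_of_mem (hmim i), hm]
    omega
  -- basic membership facts
  have hmu : u ≠ m := fun h => hym (h ▸ hyu)
  have hyA : ∀ i, y ∈ A i := fun i =>
    Finset.mem_insert_of_mem (Finset.mem_erase.mpr ⟨hyu0, hyu⟩)
  have hyB : ∀ i, y ∉ B i := by
    intro i h
    rcases Finset.mem_insert.mp h with h | h
    · exact hyu0 h
    · exact hym (Finset.mem_of_mem_erase h)
  have hu0A : ∀ i, mi i ∉ u → u0 ∉ A i := by
    intro i hi h
    rcases Finset.mem_insert.mp h with h | h
    · exact hmiu0 i h.symm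
    · exact Finset.notMem_erase _ _ h
  have hu0B : ∀ i, u0 ∈ B i := fun i => Finset.mem_insert_self _ _
  -- distinctness facts
  have hAm : ∀ i, A i ≠ m := fun i h => hym (h ▸ hyA i)
  have hAu : ∀ i, mi i ∉ u → A i ≠ u := fun i hi h => hu0A i hi (h ▸ hu0u)
  have hBm : ∀ i, B i ≠ m := fun i h => hu0m (h ▸ hu0B i)
  have hBu : ∀ i, B i ≠ u := fun i h => hyB i (h ▸ hyu)
  have hAB : ∀ i j, A i ≠ B j := fun i j h => hyB j (h ▸ hyA i)
  have hAA : ∀ i j, i ≠ j → mi j ∉ u → A i ≠ A j := by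
    intro i j hij hj h
    have h1 : mi j ∈ A i := h ▸ Finset.mem_insert_self _ _
    rcases Finset.mem_insert.mp h1 with h1 | h1
    · exact hij (hmiinj h1).symm
    · exact hj (Finset.mem_of_mem_erase h1)
  have hBB : ∀ i j, i ≠ j → B i ≠ B j := by
    intro i j hij h
    have h1 : mi i ∈ B j :=
      Finset.mem_insert_of_mem (Finset.mem_erase.mpr ⟨fun hc => hij (hmiinj hc), hmim i⟩)
    rw [← h] at h1
    rcases Finset.mem_insert.mp h1 with h1 | h1
    · exact hmiu0 i h1
    · exact Finset.notMem_erase _ _ h1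
  -- the explicit form of Fmu
  have hF : Fmu 𝕜 d m u = X ⟨m, hm⟩ * pApp 𝕜 d (u.erase u0) u0 +
      ∑ i : Fin d, ((-1 : 𝕜) ^ ((i : ℕ) + 1)) •
        (pApp 𝕜 d (u.erase u0) (mi i) * pPre 𝕜 d u0 (m.erase (mi i))) := by
    simp only [Fmu]
    rw [dif_pos ⟨hm, hu, hu2⟩]
  -- key description of the support
  have key : ∀ s ∈ (Fmu 𝕜 d m u).support,
      s = Finsupp.single (⟨m, hm⟩ : Idx d n) 1 + Finsupp.single ⟨u, hu⟩ 1 ∨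
      ∃ i : Fin d, ∃ h1 : mi i ∉ u,
        s = Finsupp.single (⟨A i, hcardA i h1⟩ : Idx d n) 1 +
            Finsupp.single ⟨B i, hcardB i⟩ 1 := by
    intro s hs
    rw [hF] at hs
    rcases Finset.mem_union.mp (MvPolynomial.support_add hs) with hs | hs
    · left
      have hc1 : u0 ∉ u.erase u0 := Finset.notMem_erase _ _
      have hc2 : (insert u0 (u.erase u0)).card = d := by
        rw [Finset.insert_erase hu0u]; exact hu
      rw [pApp, dif_pos ⟨hc1, hc2⟩] at hs
      have hsub : (⟨insert u0 (u.erase u0), hc2⟩ : Idx d n) = ⟨u, hu⟩ :=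
        Subtype.ext (Finset.insert_erase hu0u)
      rw [hsub] at hs
      have heq : (X (⟨m, hm⟩ : Idx d n) : MvPolynomial (Idx d n) 𝕜) *
          ((-1 : 𝕜) ^ ((u.erase u0).filter fun x => u0 < x).card • X ⟨u, hu⟩) =
          (1 : 𝕜) • (((1 : 𝕜) • X ⟨m, hm⟩) *
            ((-1 : 𝕜) ^ ((u.erase u0).filter fun x => u0 < x).card • X ⟨u, hu⟩)) := by
        rw [one_smul, one_smul]
      rw [heq] at hs
      exact Finset.mem_singleton.mp (aux_support_smul_mul _ _ _ _ _ hs)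
    · right
      obtain ⟨i, _, hi⟩ := Finset.mem_biUnion.mp (MvPolynomial.support_sum hs)
      by_cases hmiu : mi i ∈ u
      · exfalso
        have hz : pApp 𝕜 d (u.erase u0) (mi i) = 0 := by
          rw [pApp, dif_neg]
          intro hc
          exact hc.1 (Finset.mem_erase.mpr ⟨hmiu0 i, hmiu⟩)
        rw [hz, zero_mul, smul_zero] at hi
        simp at hi
      · refine ⟨i, hmiu, ?_⟩
        have hc1 : mi i ∉ u.erase u0 := fun hc => hmiu (Finset.mem_of_mem_erase hc)
        have hc2 : (insert (mi i) (u.erase u0)).card = d := hcardA i hmiu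
        have hp1 : u0 ∉ m.erase (mi i) := fun hc => hu0m (Finset.mem_of_mem_erase hc)
        have hp2 : (insert u0 (m.erase (mi i))).card = d := hcardB i
        rw [pApp, dif_pos ⟨hc1, hc2⟩, pPre, dif_pos ⟨hp1, hp2⟩] at hi
        exact Finset.mem_singleton.mp (aux_support_smul_mul _ _ _ _ _ hi)
  -- subtype-level inequalities
  have ne1 : (⟨m, hm⟩ : Idx d n) ≠ ⟨u, hu⟩ := fun h => hmu (congrArg Subtype.val h).symm
  have neAB : ∀ i (h1 : mi i ∉ u), (⟨A i, hcardA i h1⟩ : Idx d n) ≠ ⟨B i, hcardB i⟩ :=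
    fun i h1 h => hAB i i (congrArg Subtype.val h)
  constructor
  · intro s hs
    rcases key s hs with h | ⟨i, h1, h⟩
    · rw [h, aux_support_pair ne1]
      exact Finset.card_pair ne1
    · rw [h, aux_support_pair (neAB i h1)]
      exact Finset.card_pair (neAB i h1)
  · intro s hs t ht hst
    rcases key s hs with h | ⟨i, h1, h⟩ <;> rcases key t ht with h' | ⟨j, h1', h'⟩
    · exact absurd (h.trans h'.symm) hst
    · rw [h, h', aux_support_pair ne1, aux_support_pair (neAB j h1')]
      exact aux_disj_pair
        (fun hc => (hAm j) (congrArg Subtype.val hc).symm)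
        (fun hc => (hBm j) (congrArg Subtype.val hc).symm)
        (fun hc => (hAu j h1') (congrArg Subtype.val hc).symm)
        (fun hc => (hBu j) (congrArg Subtype.val hc).symm)
    · rw [h, h', aux_support_pair (neAB i h1), aux_support_pair ne1]
      exact aux_disj_pair
        (fun hc => (hAm i) (congrArg Subtype.val hc))
        (fun hc => (hAu i h1) (congrArg Subtype.val hc))
        (fun hc => (hBm i) (congrArg Subtype.val hc))
        (fun hc => (hBu i) (congrArg Subtype.val hc))
    · by_cases hij : i = j
      · subst hij
        exact absurd (h.trans h'.symm) hst
      · rw [h, h', aux_support_pair (neAB i h1), aux_support_pair (neAB j h1')]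
        exact aux_disj_pair
          (fun hc => (hAA i j hij h1') (congrArg Subtype.val hc))
          (fun hc => (hAB i j) (congrArg Subtype.val hc))
          (fun hc => (hAB j i) (congrArg Subtype.val hc).symm)
          (fun hc => (hBB i j hij) (congrArg Subtype.val hc))

end Resolution
end

section
/- For every u ∈ Iᵐ_{d,n}, the m-primary Plücker relation F_{m,u} has exactly |u ∖ m| + 1 nonzero terms; consequently 0 ≤ rank(F_{m,u}) ≤ d − 2, i.e. F_{m,u} has at least 3 and at most d + 1 nonzero terms. -/
open MvPolynomial

namespace Resolution

variable (𝕜 : Type) [Field 𝕜] (d : ℕ) {n : ℕ}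

/- ### Auxiliary lemmas -/

lemma supp_add_eq' {σ K : Type*} [CommSemiring K] [DecidableEq σ] {p q : MvPolynomial σ K}
    (h : Disjoint p.support q.support) : (p + q).support = p.support ∪ q.support := by
  ext x
  simp only [mem_support_iff, coeff_add, Finset.mem_union]
  by_cases hp : coeff x p = 0
  · by_cases hq : coeff x q = 0 <;> simp [hp, hq]
  · have hq : coeff x q = 0 := by
      by_contra hq
      exact (Finset.disjoint_left.mp h (mem_support_iff.mpr hp)) (mem_support_iff.mpr hq)
    simp [hp, hq]

lemma support_sum_monomial' {σ K ι : Type*} [CommSemiring K] [DecidableEq σ]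
    (s : Finset ι) (E : ι → (σ →₀ ℕ)) (c : ι → K)
    (hE : Set.InjOn E s) (hc : ∀ i ∈ s, c i ≠ 0) :
    (∑ i ∈ s, (monomial (E i) (c i) : MvPolynomial σ K)).support = s.image E := by
  classical
  induction s using Finset.cons_induction with
  | empty => simp
  | cons a s ha ih =>
    have ih' := ih (hE.mono (by simp [Finset.coe_cons, Set.subset_insert]))
      (fun i hi => hc i (Finset.mem_cons_of_mem hi))
    rw [Finset.sum_cons, Finset.cons_eq_insert, Finset.image_insert]
    have hd : Disjoint ((monomial (E a) (c a) : MvPolynomial σ K)).support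
        (∑ i ∈ s, (monomial (E i) (c i) : MvPolynomial σ K)).support := by
      rw [support_monomial, if_neg (hc a (Finset.mem_cons_self a s)), ih']
      simp only [Finset.disjoint_singleton_left, Finset.mem_image, not_exists]
      rintro i ⟨hi, hEi⟩
      exact ha (by rwa [hE (by simp) (by simp [hi]) hEi.symm])
    rw [supp_add_eq' hd, support_monomial, if_neg (hc a (Finset.mem_cons_self a s)), ih']
    exact (Finset.insert_eq _ _).symm

lemma pair_eq' {σ : Type*} [DecidableEq σ] {a b c e : σ} (hab : a ≠ b) (hce : c ≠ e)
    (h : (Finsupp.single a 1 + Finsupp.single b 1 : σ →₀ ℕ)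
       = Finsupp.single c 1 + Finsupp.single e 1) :
    (a = c ∧ b = e) ∨ (a = e ∧ b = c) := by
  have supp : ∀ (x y : σ), x ≠ y →
      (Finsupp.single x 1 + Finsupp.single y 1 : σ →₀ ℕ).support = {x, y} := by
    intro x y hxy
    rw [Finsupp.support_add_eq, Finsupp.support_single_ne_zero _ one_ne_zero,
      Finsupp.support_single_ne_zero _ one_ne_zero]
    · rfl
    rw [Finsupp.support_single_ne_zero _ one_ne_zero,
      Finsupp.support_single_ne_zero _ one_ne_zero]
    simpa using hxy
  have hs : ({a, b} : Finset σ) = {c, e} := by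
    rw [← supp a b hab, ← supp c e hce, h]
  have ha : a = c ∨ a = e := by
    have : a ∈ ({c, e} : Finset σ) := hs ▸ (by simp)
    simpa using this
  have hb : b = c ∨ b = e := by
    have : b ∈ ({c, e} : Finset σ) := hs ▸ (by simp)
    simpa using this
  rcases ha with h1 | h1 <;> rcases hb with h2 | h2
  · exact absurd (h1.trans h2.symm) hab
  · exact Or.inl ⟨h1, h2⟩
  · exact Or.inr ⟨h1, h2⟩
  · exact absurd (h1.trans h2.symm) hab

lemma smulX_mul_smulX {σ K : Type*} [CommSemiring K] (a b : σ) (c e : K) :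
    (c • X a) * (e • X b) =
      (monomial (Finsupp.single a 1 + Finsupp.single b 1) (c * e) : MvPolynomial σ K) := by
  rw [X, X, smul_monomial, smul_monomial, monomial_mul]
  simp [smul_eq_mul]

lemma X_mul_smulX {σ K : Type*} [CommSemiring K] (a b : σ) (e : K) :
    (X a) * (e • X b) =
      (monomial (Finsupp.single a 1 + Finsupp.single b 1) e : MvPolynomial σ K) := by
  have := smulX_mul_smulX a b (1 : K) e
  simpa using this

/-- **Number of terms of an `m`-primary Plücker relation.**
For every `u ∈ Iᵐ_{d,n}`, the `m`-primary Plücker relation `F_{m,u}` has exactly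
`|u ∖ m| + 1` nonzero terms; consequently `0 ≤ rank F_{m,u} ≤ d − 2`, i.e. `F_{m,u}` has
at least `3` and at most `d + 1` nonzero terms. -/
theorem card_support_Fmu
    (𝕜 : Type) [Field 𝕜] {d n : ℕ} (hd : 1 ≤ d) (hdn : d < n)
    (m u : Finset (Fin n)) (hm : m.card = d) (hu : u.card = d)
    (hu2 : 2 ≤ (u \ m).card) :
    (Fmu 𝕜 d m u).support.card = (u \ m).card + 1 ∧
    3 ≤ (Fmu 𝕜 d m u).support.card ∧ (Fmu 𝕜 d m u).support.card ≤ d + 1 := by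
  classical
  have h : m.card = d ∧ u.card = d ∧ 2 ≤ (u \ m).card := ⟨hm, hu, hu2⟩
  have hne : (u \ m).Nonempty :=
    Finset.card_pos.mp (lt_of_lt_of_le two_pos hu2)
  set u0 : Fin n := (u \ m).min' hne with hu0def
  have hu0 : u0 ∈ u \ m := Finset.min'_mem _ _
  have hu0u : u0 ∈ u := (Finset.mem_sdiff.mp hu0).1
  have hu0m : u0 ∉ m := (Finset.mem_sdiff.mp hu0).2
  have hmne : (1 : 𝕜) ≠ 0 := one_ne_zero
  have hneg : (-1 : 𝕜) ≠ 0 := neg_ne_zero.mpr one_ne_zero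
  set r : Finset (Fin n) := u.erase u0 with hrdef
  have hrcard : r.card = d - 1 := by rw [hrdef, Finset.card_erase_of_mem hu0u, hu]
  have hrsub : r ⊆ u := Finset.erase_subset _ _
  set g : Fin d → Fin n := fun i => ((m.orderIsoOfFin hm) i : Fin n) with hgdef
  have hgm : ∀ i, g i ∈ m := fun i => ((m.orderIsoOfFin hm) i).2
  have hginj : Function.Injective g := fun i j hij =>
    (m.orderIsoOfFin hm).injective (Subtype.ext hij)
  have hgsurj : ∀ x ∈ m, ∃ i, g i = x := fun x hx =>
    ⟨(m.orderIsoOfFin hm).symm ⟨x, hx⟩,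
      congrArg Subtype.val ((m.orderIsoOfFin hm).apply_symm_apply ⟨x, hx⟩)⟩
  have hgu0 : ∀ i, g i ≠ u0 := fun i hh => hu0m (hh ▸ hgm i)
  -- unfold Fmu
  have hF : Fmu 𝕜 d m u = X ⟨m, hm⟩ * pApp 𝕜 d r u0 +
      ∑ i : Fin d, ((-1 : 𝕜) ^ ((i : ℕ) + 1)) •
        (pApp 𝕜 d r (g i) * pPre 𝕜 d u0 (m.erase (g i))) := by
    rw [Fmu, dif_pos h]
  -- the leading term
  have hins : insert u0 r = u := Finset.insert_erase hu0u
  have hucard' : (insert u0 r).card = d := by rw [hins]; exact hu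
  have hP0 : pApp 𝕜 d r u0 = ((-1 : 𝕜) ^ ((r.filter fun x => u0 < x).card)) • X ⟨u, hu⟩ := by
    rw [pApp, dif_pos ⟨Finset.notMem_erase _ _, hucard'⟩]
    congr 1
    exact congrArg X (Subtype.ext hins)
  -- card facts
  have hAcard : ∀ i : Fin d, g i ∉ u → (insert (g i) r).card = d := by
    intro i hgu
    rw [Finset.card_insert_of_notMem (fun hh => hgu (hrsub hh)), hrcard]
    omega
  have hBcard : ∀ i : Fin d, u0 ∉ m.erase (g i) ∧ (insert u0 (m.erase (g i))).card = d := by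
    intro i
    have h1 : u0 ∉ m.erase (g i) := fun hh => hu0m (Finset.mem_of_mem_erase hh)
    refine ⟨h1, ?_⟩
    rw [Finset.card_insert_of_notMem h1, Finset.card_erase_of_mem (hgm i), hm]
    omega
  -- exponents and coefficients
  set E0 : Idx d n →₀ ℕ :=
    Finsupp.single (⟨m, hm⟩ : Idx d n) 1 + Finsupp.single (⟨u, hu⟩ : Idx d n) 1 with hE0def
  set E : Fin d → (Idx d n →₀ ℕ) := fun i =>
    if hh : g i ∉ u then
      Finsupp.single (⟨insert (g i) r, hAcard i hh⟩ : Idx d n) 1 +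
        Finsupp.single (⟨insert u0 (m.erase (g i)), (hBcard i).2⟩ : Idx d n) 1
    else 0 with hEdef
  set c : Fin d → 𝕜 := fun i =>
    (-1 : 𝕜) ^ ((i : ℕ) + 1) *
      ((-1 : 𝕜) ^ ((r.filter fun x => g i < x).card) *
        (-1 : 𝕜) ^ (((m.erase (g i)).filter fun x => x < u0).card)) with hcdef
  set T : Finset (Fin d) := Finset.univ.filter (fun i => g i ∉ u) with hTdef
  have hmemT : ∀ i, i ∈ T ↔ g i ∉ u := by
    intro i; rw [hTdef, Finset.mem_filter]; simp
  -- rewrite each nonzero summand as a monomial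
  have key : ∀ i ∈ T, ((-1 : 𝕜) ^ ((i : ℕ) + 1)) •
      (pApp 𝕜 d r (g i) * pPre 𝕜 d u0 (m.erase (g i))) = monomial (E i) (c i) := by
    intro i hi
    have hgu : g i ∉ u := (hmemT i).mp hi
    rw [pApp, dif_pos ⟨fun hh => hgu (hrsub hh), hAcard i hgu⟩,
      pPre, dif_pos (hBcard i), smulX_mul_smulX, smul_monomial, hEdef, hcdef]
    simp only [dif_pos hgu, smul_eq_mul]
  -- vanishing of the other summands
  have hvan : ∀ i ∈ Finset.univ (α := Fin d), ((-1 : 𝕜) ^ ((i : ℕ) + 1)) •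
      (pApp 𝕜 d r (g i) * pPre 𝕜 d u0 (m.erase (g i))) ≠ 0 → g i ∉ u := by
    intro i _ hne0 hgu
    apply hne0
    have : pApp 𝕜 d r (g i) = 0 := by
      rw [pApp, dif_neg]
      rintro ⟨h1, -⟩
      exact h1 (Finset.mem_erase.mpr ⟨hgu0 i, hgu⟩)
    rw [this, zero_mul, smul_zero]
  have hFsum : Fmu 𝕜 d m u =
      monomial E0 ((-1 : 𝕜) ^ ((r.filter fun x => u0 < x).card)) +
        ∑ i ∈ T, monomial (E i) (c i) := by
    rw [hF, hP0, X_mul_smulX, ← Finset.sum_filter_of_ne hvan]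
    exact congrArg₂ (· + ·) rfl (Finset.sum_congr rfl key)
  -- basic distinctness facts
  have hmnequ : m ≠ u := by
    intro hh
    rw [hh, Finset.sdiff_self] at hne
    exact Finset.not_nonempty_empty hne
  have hu0nr : u0 ∉ r := Finset.notMem_erase _ _
  have hu0A : ∀ i : Fin d, u0 ∉ insert (g i) r := by
    intro i hh
    rcases Finset.mem_insert.mp hh with hh | hh
    · exact hgu0 i hh.symm
    · exact hu0nr hh
  have hu0B : ∀ i : Fin d, u0 ∈ insert u0 (m.erase (g i)) := fun i => Finset.mem_insert_self _ _
  have hAB : ∀ (i : Fin d) (hgu : g i ∉ u),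
      (⟨insert (g i) r, hAcard i hgu⟩ : Idx d n) ≠ ⟨insert u0 (m.erase (g i)), (hBcard i).2⟩ := by
    intro i hgu hh
    have hv : insert (g i) r = insert u0 (m.erase (g i)) := congrArg Subtype.val hh
    have h2 := hu0B i
    rw [← hv] at h2
    exact hu0A i h2
  -- a second element of u \ m, distinct from u0
  obtain ⟨w, hw⟩ : ∃ w, w ∈ u \ m ∧ w ≠ u0 := by
    obtain ⟨a, ha, b, hb, hab⟩ := Finset.one_lt_card.mp (lt_of_lt_of_le one_lt_two hu2)
    by_cases hau : a = u0
    · refine ⟨b, hb, fun hh => hab ?_⟩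
      rw [hau, hh]
    · exact ⟨a, ha, hau⟩
  have hwu : w ∈ u := (Finset.mem_sdiff.mp hw.1).1
  have hwm : w ∉ m := (Finset.mem_sdiff.mp hw.1).2
  have hwr : w ∈ r := Finset.mem_erase.mpr ⟨hw.2, hwu⟩
  have hmA : ∀ i : Fin d, m ≠ insert (g i) r := by
    intro i hh
    exact hwm (hh ▸ Finset.mem_insert_of_mem hwr)
  have hmB : ∀ i : Fin d, m ≠ insert u0 (m.erase (g i)) := by
    intro i hh
    exact hu0m (hh ▸ hu0B i)
  -- injectivity of E on T
  have hEinj : Set.InjOn E ↑T := by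
    intro i hi j hj hij
    have hgi : g i ∉ u := (hmemT i).mp hi
    have hgj : g j ∉ u := (hmemT j).mp hj
    rw [hEdef] at hij
    simp only [dif_pos hgi, dif_pos hgj] at hij
    rcases pair_eq' (hAB i hgi) (hAB j hgj) hij with ⟨h1, -⟩ | ⟨h1, -⟩
    · have h1' : insert (g i) r = insert (g j) r := congrArg Subtype.val h1
      have : g i ∈ insert (g j) r := h1' ▸ Finset.mem_insert_self _ _
      rcases Finset.mem_insert.mp this with hh | hh
      · exact hginj hh
      · exact absurd (hrsub hh) hgi
    · have h1' : insert (g i) r = insert u0 (m.erase (g j)) := congrArg Subtype.val h1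
      exact absurd (h1' ▸ hu0B j) (hu0A i)
  -- E0 is not among the E i
  have hE0notin : E0 ∉ T.image E := by
    rw [Finset.mem_image]
    rintro ⟨i, hi, hEi⟩
    have hgi : g i ∉ u := (hmemT i).mp hi
    rw [hEdef] at hEi
    simp only [dif_pos hgi] at hEi
    rw [hE0def] at hEi
    have hmu' : (⟨m, hm⟩ : Idx d n) ≠ ⟨u, hu⟩ := fun hh => hmnequ (congrArg Subtype.val hh)
    rcases pair_eq' (hAB i hgi) hmu' hEi with ⟨h1, -⟩ | ⟨-, h2⟩
    · exact hmA i (congrArg Subtype.val h1).symm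
    · exact hmB i (congrArg Subtype.val h2).symm
  -- coefficients are nonzero
  have hc0 : ((-1 : 𝕜) ^ ((r.filter fun x => u0 < x).card)) ≠ 0 := pow_ne_zero _ hneg
  have hcne : ∀ i ∈ T, c i ≠ 0 := by
    intro i _
    exact mul_ne_zero (pow_ne_zero _ hneg) (mul_ne_zero (pow_ne_zero _ hneg) (pow_ne_zero _ hneg))
  -- compute the support
  have hsupp : (Fmu 𝕜 d m u).support = insert E0 (T.image E) := by
    rw [hFsum, supp_add_eq', support_monomial, if_neg hc0,
      support_sum_monomial' T E c hEinj hcne, Finset.insert_eq]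
    rw [support_monomial, if_neg hc0, support_sum_monomial' T E c hEinj hcne]
    simpa using hE0notin
  -- compute the cardinality
  have hTcard : T.card = (u \ m).card := by
    have himg : T.image g = m \ u := by
      ext x
      simp only [Finset.mem_image, Finset.mem_sdiff]
      constructor
      · rintro ⟨i, hi, rfl⟩
        exact ⟨hgm i, (hmemT i).mp hi⟩
      · rintro ⟨hxm, hxu⟩
        obtain ⟨i, rfl⟩ := hgsurj x hxm
        exact ⟨i, (hmemT i).mpr hxu, rfl⟩
    have h1 : T.card = (m \ u).card := by
      rw [← himg, Finset.card_image_of_injective _ hginj]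
    rw [h1, Finset.card_sdiff_comm (hm.trans hu.symm)]
  have hcard : (Fmu 𝕜 d m u).support.card = (u \ m).card + 1 := by
    rw [hsupp, Finset.card_insert_of_notMem hE0notin,
      Finset.card_image_of_injOn hEinj, hTcard]
  refine ⟨hcard, ?_, ?_⟩
  · rw [hcard]; omega
  · rw [hcard]
    have : (u \ m).card ≤ u.card := Finset.card_le_card (Finset.sdiff_subset)
    omega

end Resolution
end
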